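/- Let G = (V,E) be a finite graph. Then every complex zero of the univariate matching polynomial μ(G;y) = Σ_k m_k(G) y^k, where m_k(G) is the number of k-edge matchings of G, is a nonpositive real number. -/

import Mathlib

namespace HLaux

variable {V E : Type*} [Fintype E] [DecidableEq E] [DecidableEq V]

section
variable (ε₁ ε₂ : E → V)

def good (M : Finset E) : Prop :=
  (∀ e ∈ M, ε₁ e ≠ ε₂ e) ∧
    ∀ e ∈ M, ∀ f ∈ M, e ≠ f →
      ε₁ e ≠ ε₁ f ∧ ε₁ e ≠ ε₂ f ∧ ε₂ e ≠ ε₁ f ∧ ε₂ e ≠ ε₂ f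

instance : DecidablePred (good ε₁ ε₂) := fun M => by unfold good; exact instDecidableAnd

def inside (W : Finset V) (M : Finset E) : Prop := ∀ e ∈ M, ε₁ e ∈ W ∧ ε₂ e ∈ W

instance (W : Finset V) : DecidablePred (inside ε₁ ε₂ W) := fun M => by
  unfold inside; infer_instance

noncomputable def q (t : ℂ) (W : Finset V) : ℂ :=
  ∑ M ∈ Finset.univ.filter (fun M => good ε₁ ε₂ M ∧ inside ε₁ ε₂ W M),
    t ^ (2 * M.card)

def inc (v : V) (W : Finset V) : Finset E :=
  Finset.univ.filter fun e =>
    ε₁ e ≠ ε₂ e ∧ ε₁ e ∈ W ∧ ε₂ e ∈ W ∧ (ε₁ e = v ∨ ε₂ e = v)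

def oth (v : V) (e : E) : V := if ε₁ e = v then ε₂ e else ε₁ e

lemma good_mono {M N : Finset E} (h : good ε₁ ε₂ M) (hNM : N ⊆ M) :
    good ε₁ ε₂ N :=
  ⟨fun e he => h.1 e (hNM he),
   fun e he f hf hef => h.2 e (hNM he) f (hNM hf) hef⟩

lemma q_empty (t : ℂ) : q ε₁ ε₂ t (∅ : Finset V) = 1 := by
  have h : Finset.univ.filter
      (fun M => good ε₁ ε₂ M ∧ inside ε₁ ε₂ (∅ : Finset V) M) = {(∅ : Finset E)} := by
    ext M
    simp only [Finset.mem_filter, Finset.mem_univ, true_and, Finset.mem_singleton]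
    constructor
    · rintro ⟨-, hin⟩
      rw [Finset.eq_empty_iff_forall_notMem]
      intro e he
      exact absurd (hin e he).1 (Finset.notMem_empty _)
    · rintro rfl
      exact ⟨⟨fun e he => absurd he (Finset.notMem_empty _),
        fun e he => absurd he (Finset.notMem_empty _)⟩,
        fun e he => absurd he (Finset.notMem_empty _)⟩
  rw [q, h]
  simp

lemma oth_cases {v : V} {e : E} (h1 : ε₁ e ≠ ε₂ e) (h : ε₁ e = v ∨ ε₂ e = v) :
    (ε₁ e = v ∧ ε₂ e = oth ε₁ ε₂ v e) ∨ (ε₂ e = v ∧ ε₁ e = oth ε₁ ε₂ v e) := by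
  unfold oth
  by_cases h2 : ε₁ e = v
  · simp [h2]
  · rcases h with h | h
    · exact absurd h h2
    · simp [h2, h]

lemma recurrence (t : ℂ) (v : V) (W : Finset V) (hv : v ∈ W) :
    q ε₁ ε₂ t W = q ε₁ ε₂ t (W.erase v)
      + ∑ e ∈ inc ε₁ ε₂ v W,
          t ^ 2 * q ε₁ ε₂ t ((W.erase v).erase (oth ε₁ ε₂ v e)) := by
  set A := Finset.univ.filter (fun M => good ε₁ ε₂ M ∧ inside ε₁ ε₂ W M) with hA
  have hsplit := Finset.sum_filter_add_sum_filter_not A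
      (fun M => ∀ e ∈ M, ε₁ e ≠ v ∧ ε₂ e ≠ v) (fun M => t ^ (2 * M.card))
  -- first piece: matchings avoiding v
  have h0 : A.filter (fun M => ∀ e ∈ M, ε₁ e ≠ v ∧ ε₂ e ≠ v)
      = Finset.univ.filter (fun M => good ε₁ ε₂ M ∧ inside ε₁ ε₂ (W.erase v) M) := by
    ext M
    simp only [hA, Finset.mem_filter, Finset.mem_univ, true_and]
    simp only [hA, Finset.filter_filter, Finset.mem_filter, Finset.mem_univ, true_and,
      inside, Finset.mem_erase]
    constructor
    · rintro ⟨⟨hg, hin⟩, hnv⟩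
      exact ⟨hg, fun e he => ⟨⟨(hnv e he).1, (hin e he).1⟩, (hnv e he).2, (hin e he).2⟩⟩
    · rintro ⟨hg, h⟩
      exact ⟨⟨hg, fun e he => ⟨(h e he).1.2, (h e he).2.2⟩⟩,
        fun e he => ⟨(h e he).1.1, (h e he).2.1⟩⟩
  -- second piece: matchings covering v
  have h1 : A.filter (fun M => ¬ ∀ e ∈ M, ε₁ e ≠ v ∧ ε₂ e ≠ v)
      = (inc ε₁ ε₂ v W).biUnion (fun e => A.filter (fun M => e ∈ M)) := by
    ext M
    simp only [Finset.mem_filter, Finset.mem_biUnion]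
    constructor
    · rintro ⟨hM, hnv⟩
      push_neg at hnv
      obtain ⟨e, he, hev⟩ := hnv
      have hgood : good ε₁ ε₂ M := (Finset.mem_filter.mp hM).2.1
      have hin : inside ε₁ ε₂ W M := (Finset.mem_filter.mp hM).2.2
      have hev' : ε₁ e = v ∨ ε₂ e = v := by tauto
      refine ⟨e, ?_, hM, he⟩
      exact Finset.mem_filter.mpr ⟨Finset.mem_univ _,
        hgood.1 e he, (hin e he).1, (hin e he).2, hev'⟩
    · rintro ⟨e, heinc, hM, he⟩
      refine ⟨hM, ?_⟩
      intro hall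
      have := Finset.mem_filter.mp heinc
      rcases this.2.2.2.2 with h | h
      · exact (hall e he).1 h
      · exact (hall e he).2 h
  have hdisj : (↑(inc ε₁ ε₂ v W) : Set E).PairwiseDisjoint
      (fun e => A.filter (fun M => e ∈ M)) := by
    intro e he f hf hef
    simp only [Function.onFun]
    rw [Finset.disjoint_left]
    intro M hMe hMf
    have hgood : good ε₁ ε₂ M := (Finset.mem_filter.mp (Finset.mem_filter.mp hMe).1).2.1
    have h4 := hgood.2 e (Finset.mem_filter.mp hMe).2 f (Finset.mem_filter.mp hMf).2 hef
    have he' := (Finset.mem_filter.mp (Finset.mem_coe.mp he)).2.2.2.2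
    have hf' := (Finset.mem_filter.mp (Finset.mem_coe.mp hf)).2.2.2.2
    rcases he' with h | h <;> rcases hf' with h' | h' <;>
      [exact h4.1 (h.trans h'.symm); exact h4.2.1 (h.trans h'.symm);
       exact h4.2.2.1 (h.trans h'.symm); exact h4.2.2.2 (h.trans h'.symm)]
  -- per-edge bijection
  have h2 : ∀ e ∈ inc ε₁ ε₂ v W,
      ∑ M ∈ A.filter (fun M => e ∈ M), t ^ (2 * M.card)
        = t ^ 2 * q ε₁ ε₂ t ((W.erase v).erase (oth ε₁ ε₂ v e)) := by
    intro e heinc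
    have he1 : ε₁ e ≠ ε₂ e := (Finset.mem_filter.mp heinc).2.1
    have he2 : ε₁ e ∈ W := (Finset.mem_filter.mp heinc).2.2.1
    have he3 : ε₂ e ∈ W := (Finset.mem_filter.mp heinc).2.2.2.1
    have he4 : ε₁ e = v ∨ ε₂ e = v := (Finset.mem_filter.mp heinc).2.2.2.2
    have hcases := oth_cases ε₁ ε₂ he1 he4
    set W'' := (W.erase v).erase (oth ε₁ ε₂ v e) with hW''
    -- key: x avoids both endpoints of e iff x ∈ erase erase region
    have hmemW'' : ∀ x : V, x ∈ W'' ↔ (x ≠ ε₁ e ∧ x ≠ ε₂ e ∧ x ∈ W) := by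
      intro x
      simp only [hW'', Finset.mem_erase]
      rcases hcases with ⟨hc1, hc2⟩ | ⟨hc1, hc2⟩
      · rw [hc2, hc1]; tauto
      · rw [hc2, hc1]
    rw [q, Finset.mul_sum]
    refine Finset.sum_nbij' (fun M => M.erase e) (fun N => insert e N) ?_ ?_ ?_ ?_ ?_
    · -- forward membership
      intro M hM
      have hMA := Finset.mem_filter.mp (Finset.mem_filter.mp hM).1
      have heM := (Finset.mem_filter.mp hM).2
      have hgood : good ε₁ ε₂ M := hMA.2.1
      have hin : inside ε₁ ε₂ W M := hMA.2.2
      refine Finset.mem_filter.mpr ⟨Finset.mem_univ _,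
        good_mono ε₁ ε₂ hgood (Finset.erase_subset _ _), ?_⟩
      intro f hf
      have hfM : f ∈ M := Finset.mem_of_mem_erase hf
      have hfe : f ≠ e := Finset.ne_of_mem_erase hf
      have h4 := hgood.2 f hfM e heM hfe
      exact ⟨(hmemW'' _).mpr ⟨h4.1, h4.2.1, (hin f hfM).1⟩,
        (hmemW'' _).mpr ⟨h4.2.2.1, h4.2.2.2, (hin f hfM).2⟩⟩
    · -- backward membership
      intro N hN
      have hgood : good ε₁ ε₂ N := (Finset.mem_filter.mp hN).2.1
      have hin : inside ε₁ ε₂ W'' N := (Finset.mem_filter.mp hN).2.2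
      have heN : e ∉ N := by
        intro heN
        have := (hmemW'' (ε₁ e)).mp (hin e heN).1
        exact this.1 rfl
      have hvf : ∀ f ∈ N, (ε₁ e ≠ ε₁ f ∧ ε₁ e ≠ ε₂ f ∧ ε₂ e ≠ ε₁ f ∧ ε₂ e ≠ ε₂ f) := by
        intro f hf
        have h1' := (hmemW'' _).mp (hin f hf).1
        have h2' := (hmemW'' _).mp (hin f hf).2
        exact ⟨fun h => h1'.1 h.symm, fun h => h2'.1 h.symm,
          fun h => h1'.2.1 h.symm, fun h => h2'.2.1 h.symm⟩
      refine Finset.mem_filter.mpr ⟨Finset.mem_filter.mpr ⟨Finset.mem_univ _, ?_, ?_⟩,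
        Finset.mem_insert_self _ _⟩
      · constructor
        · intro f hf
          rcases Finset.mem_insert.mp hf with rfl | hf
          · exact he1
          · exact hgood.1 f hf
        · intro f hf g hg hfg
          rcases Finset.mem_insert.mp hf with rfl | hf' <;>
            rcases Finset.mem_insert.mp hg with rfl | hg'
          · exact absurd rfl hfg
          · exact hvf g hg'
          · have := hvf f hf'
            exact ⟨fun h => this.1 h.symm, fun h => this.2.2.1 h.symm,
              fun h => this.2.1 h.symm, fun h => this.2.2.2 h.symm⟩
          · exact hgood.2 f hf' g hg' hfg
      · intro f hf
        rcases Finset.mem_insert.mp hf with rfl | hf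
        · exact ⟨he2, he3⟩
        · have h1' := (hmemW'' _).mp (hin f hf).1
          have h2' := (hmemW'' _).mp (hin f hf).2
          exact ⟨h1'.2.2, h2'.2.2⟩
    · -- left inverse
      intro M hM
      exact Finset.insert_erase (Finset.mem_filter.mp hM).2
    · -- right inverse
      intro N hN
      apply Finset.erase_insert
      intro heN
      have hin : inside ε₁ ε₂ W'' N := (Finset.mem_filter.mp hN).2.2
      exact ((hmemW'' (ε₁ e)).mp (hin e heN).1).1 rfl
    · -- values
      intro M hM
      have heM : e ∈ M := (Finset.mem_filter.mp hM).2
      have hpos : 0 < M.card := Finset.card_pos.mpr ⟨e, heM⟩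
      have : M.card = (M.erase e).card + 1 := by
        rw [Finset.card_erase_of_mem heM]
        omega
      rw [this]
      ring
  calc q ε₁ ε₂ t W = ∑ M ∈ A, t ^ (2 * M.card) := rfl
    _ = ∑ M ∈ A.filter (fun M => ∀ e ∈ M, ε₁ e ≠ v ∧ ε₂ e ≠ v), t ^ (2 * M.card)
        + ∑ M ∈ A.filter (fun M => ¬ ∀ e ∈ M, ε₁ e ≠ v ∧ ε₂ e ≠ v), t ^ (2 * M.card) :=
      hsplit.symm
    _ = q ε₁ ε₂ t (W.erase v)
        + ∑ e ∈ inc ε₁ ε₂ v W,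
            t ^ 2 * q ε₁ ε₂ t ((W.erase v).erase (oth ε₁ ε₂ v e)) := by
      rw [h0, h1, Finset.sum_biUnion hdisj]
      exact congrArg _ (Finset.sum_congr rfl h2)

lemma inv_re_pos {w : ℂ} (h : 0 < w.re) : 0 < (w⁻¹).re := by
  have hw : w ≠ 0 := fun h0 => by simp [h0] at h
  rw [Complex.inv_re]
  exact div_pos h (Complex.normSq_pos.mpr hw)

lemma key (t : ℂ) (ht : 0 < t.re) (W : Finset V) :
    q ε₁ ε₂ t W ≠ 0 ∧
      ∀ v ∈ W, 0 < (q ε₁ ε₂ t W / (t * q ε₁ ε₂ t (W.erase v))).re := by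
  induction W using Finset.strongInduction with
  | _ W ih =>
    have ht0 : t ≠ 0 := fun h => by simp [h] at ht
    have hratio : ∀ v ∈ W,
        0 < (q ε₁ ε₂ t W / (t * q ε₁ ε₂ t (W.erase v))).re := by
      intro v hv
      set W' := W.erase v with hW'
      have hW'sub : W' ⊂ W := Finset.erase_ssubset hv
      have hq' : q ε₁ ε₂ t W' ≠ 0 := (ih W' hW'sub).1
      have hoth : ∀ e ∈ inc ε₁ ε₂ v W, oth ε₁ ε₂ v e ∈ W' := by
        intro e he
        have h1 := (Finset.mem_filter.mp he).2.1
        have h2 := (Finset.mem_filter.mp he).2.2.1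
        have h3 := (Finset.mem_filter.mp he).2.2.2.1
        have h4 := (Finset.mem_filter.mp he).2.2.2.2
        rcases oth_cases ε₁ ε₂ h1 h4 with ⟨hc1, hc2⟩ | ⟨hc1, hc2⟩
        · exact Finset.mem_erase.mpr ⟨by rw [← hc2, ← hc1]; exact fun h => h1 h.symm,
            hc2 ▸ h3⟩
        · exact Finset.mem_erase.mpr ⟨by rw [← hc2, ← hc1]; exact h1, hc2 ▸ h2⟩
      have heq : q ε₁ ε₂ t W / (t * q ε₁ ε₂ t W')
          = t⁻¹ + ∑ e ∈ inc ε₁ ε₂ v W,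
              (q ε₁ ε₂ t W' / (t * q ε₁ ε₂ t (W'.erase (oth ε₁ ε₂ v e))))⁻¹ := by
        rw [recurrence ε₁ ε₂ t v W hv, add_div, Finset.sum_div]
        congr 1
        · rw [div_eq_iff (mul_ne_zero ht0 hq')]
          field_simp
          rfl
        · refine Finset.sum_congr rfl fun e _ => ?_
          rw [inv_div]
          field_simp
          ring
      rw [heq, Complex.add_re, Complex.re_sum]
      have h1 : 0 < (t⁻¹).re := inv_re_pos ht
      have h2 : ∀ e ∈ inc ε₁ ε₂ v W,
          0 ≤ ((q ε₁ ε₂ t W' / (t * q ε₁ ε₂ t (W'.erase (oth ε₁ ε₂ v e))))⁻¹).re := by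
        intro e he
        exact le_of_lt (inv_re_pos ((ih W' hW'sub).2 _ (hoth e he)))
      have := Finset.sum_nonneg h2
      linarith
    refine ⟨?_, hratio⟩
    rcases W.eq_empty_or_nonempty with h | ⟨v, hv⟩
    · rw [h, q_empty]
      exact one_ne_zero
    · intro h0
      have := hratio v hv
      rw [h0, zero_div] at this
      simp at this

end

end HLaux

/-- The univariate Heilmann–Lieb theorem: all zeros of the matching
polynomial `μ(G;y) = Σ_k m_k(G) y^k` are real and nonpositive. -/
theorem univariate_heilmann_lieb
    {V E : Type*} [Fintype V] [Fintype E] [DecidableEq E]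
    (ε₁ ε₂ : E → V)   -- endpoints of each edge (a loop has ε₁ e = ε₂ e)
    (IsMatching : Finset E → Prop) [DecidablePred IsMatching]
    (hmatch : ∀ M : Finset E, IsMatching M ↔
      ((∀ e ∈ M, ε₁ e ≠ ε₂ e) ∧
        ∀ e ∈ M, ∀ f ∈ M, e ≠ f →
          ε₁ e ≠ ε₁ f ∧ ε₁ e ≠ ε₂ f ∧ ε₂ e ≠ ε₁ f ∧ ε₂ e ≠ ε₂ f))
    (m : ℕ → ℕ)
    (hm : ∀ k, m k = (Finset.univ.filter
      fun M : Finset E => IsMatching M ∧ M.card = k).card)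
    (z : ℂ)
    (hz : (∑ k ∈ Finset.range (Fintype.card E + 1), (m k : ℂ) * z ^ k) = 0) :
    z.im = 0 ∧ z.re ≤ 0 := by
  haveI : DecidableEq V := Classical.decEq V
  by_contra hcon
  push_neg at hcon
  -- obtain a square root of z
  obtain ⟨s, hs⟩ : ∃ s : ℂ, s ^ 2 = z := by
    exact IsAlgClosed.exists_pow_nat_eq z (n := 2) (by norm_num)
  have hsre : s.re ≠ 0 := by
    intro h
    have him : z.im = 0 := by
      rw [← hs, pow_two, Complex.mul_im, h]
      ring
    have hre : z.re ≤ 0 := by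
      rw [← hs, pow_two, Complex.mul_re, h]
      nlinarith [sq_nonneg s.im]
    exact absurd (hcon him) (not_lt.mpr hre)
  obtain ⟨t, ht, ht2⟩ : ∃ t : ℂ, 0 < t.re ∧ t ^ 2 = z := by
    rcases hsre.lt_or_gt with h | h
    · exact ⟨-s, by simpa using h, by rw [neg_pow]; simpa using hs⟩
    · exact ⟨s, h, hs⟩
  -- the sum equals q t univ
  have hmaps : ∀ M ∈ Finset.univ.filter (fun M => HLaux.good ε₁ ε₂ M),
      M.card ∈ Finset.range (Fintype.card E + 1) := by
    intro M _
    refine Finset.mem_range.mpr (Nat.lt_succ_of_le ?_)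
    simpa using Finset.card_le_univ M
  have h1 : HLaux.q ε₁ ε₂ t Finset.univ
      = ∑ M ∈ Finset.univ.filter (fun M => HLaux.good ε₁ ε₂ M), z ^ M.card := by
    rw [HLaux.q]
    refine Finset.sum_congr ?_ fun M _ => ?_
    · refine Finset.filter_congr fun M _ => ?_
      simp [HLaux.inside]
    · rw [← ht2, ← pow_mul]
  have h2 : ∑ M ∈ Finset.univ.filter (fun M => HLaux.good ε₁ ε₂ M), z ^ M.card
      = ∑ k ∈ Finset.range (Fintype.card E + 1), (m k : ℂ) * z ^ k := by
    rw [← Finset.sum_fiberwise_of_maps_to hmaps (fun M => z ^ M.card)]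
    refine Finset.sum_congr rfl fun k _ => ?_
    have hset : (Finset.univ.filter (fun M => HLaux.good ε₁ ε₂ M)).filter
        (fun M => M.card = k)
        = Finset.univ.filter (fun M : Finset E => IsMatching M ∧ M.card = k) := by
      rw [Finset.filter_filter]
      refine Finset.filter_congr fun M _ => ?_
      rw [hmatch]
      rfl
    calc ∑ M ∈ (Finset.univ.filter (fun M => HLaux.good ε₁ ε₂ M)).filter
          (fun M => M.card = k), z ^ M.card
        = ∑ M ∈ (Finset.univ.filter (fun M => HLaux.good ε₁ ε₂ M)).filter
          (fun M => M.card = k), z ^ k := by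
          refine Finset.sum_congr rfl fun M hM => ?_
          rw [(Finset.mem_filter.mp hM).2]
      _ = (m k : ℂ) * z ^ k := by
          rw [Finset.sum_const, hset, hm k]
          simp [mul_comm]
  have hne := (HLaux.key ε₁ ε₂ t ht (Finset.univ : Finset V)).1
  rw [h1, h2, hz] at hne
  exact hne rfl
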